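/- Define the linearly-transformed particle (LTP) transport operator by T̄_{h,(1)} φ⁰_{h,k}(x) := φ⁰_{h,k}(B̄_{(1),k}(x)) = h^{−d} φ(h^{−1} J_k^{−1}(x − F̄(x⁰_k))), extended to f⁰_h by linearity. Then there exists a constant C depending only on c_w, L_φ, ρ⁰ and d (independent of h, f⁰ and the flow) such that ‖(T̄_{h,(1)} − T̄_ex) f⁰_h‖_{L^∞(ℝ^d)} ≤ C · h c_F · (1 + h c_F)^d · ‖f⁰‖_{L^∞}, where c_F := |F̄|₁² |B̄|₂. -/

import Mathlib

open scoped NNReal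
open Set

/-- Grid node `x⁰_k := h k`. -/
noncomputable def node (d : ℕ) (h : ℝ) (k : Fin d → ℤ) : Fin d → ℝ :=
  fun i => h * (k i : ℝ)

/-- Particle shape function `φ⁰_{h,k}(x) := h^{-d} φ(h⁻¹ x - k)`. -/
noncomputable def part (d : ℕ) (h : ℝ) (φ : (Fin d → ℝ) → ℝ)
    (k : Fin d → ℤ) (x : Fin d → ℝ) : ℝ :=
  (h ^ d)⁻¹ * φ (fun i => x i / h - (k i : ℝ))

/-- Partial derivative `∂_l g`. -/
noncomputable def pd (d : ℕ) (l : Fin d) (g : (Fin d → ℝ) → ℝ) : (Fin d → ℝ) → ℝ :=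
  fun x => fderiv ℝ g x (Pi.single l 1)

/-- Linearized backward flow `B̄_{(1),k}(x) := x⁰_k + J_k⁻¹ (x − F̄(x⁰_k))`, where
`J_k⁻¹ = J_{B̄}(F̄(x⁰_k))` is the Jacobian of the inverse map at `F̄(x⁰_k)`. -/
noncomputable def B1 (d : ℕ) (h : ℝ) (F : (Fin d → ℝ) ≃ (Fin d → ℝ))
    (k : Fin d → ℤ) (x : Fin d → ℝ) : Fin d → ℝ :=
  node d h k +
    fderiv ℝ (F.symm : (Fin d → ℝ) → (Fin d → ℝ)) (F (node d h k)) (x - F (node d h k))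

section Aux

lemma linfty_apply_le (d : ℕ) (L : (Fin d → ℝ) →L[ℝ] ℝ) (v : Fin d → ℝ) :
    |L v| ≤ (∑ l, |L (Pi.single l 1)|) * ‖v‖ := by
  have hv : v = ∑ l, Pi.single l (v l) := (Finset.univ_sum_single v).symm
  have : L v = ∑ l, v l * L (Pi.single l 1) := by
    conv_lhs => rw [hv]
    rw [map_sum]
    refine Finset.sum_congr rfl fun l _ => ?_
    have : Pi.single l (v l) = v l • (Pi.single l 1 : Fin d → ℝ) := by
      rw [← Pi.single_smul' l (v l) (1:ℝ)]; simp
    rw [this, map_smul]; simp [mul_comm]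
  rw [this]
  calc |∑ l, v l * L (Pi.single l 1)| ≤ ∑ l, |v l * L (Pi.single l 1)| :=
        Finset.abs_sum_le_sum_abs _ _
    _ ≤ ∑ l, |L (Pi.single l 1)| * ‖v‖ := by
        refine Finset.sum_le_sum fun l _ => ?_
        rw [abs_mul, mul_comm]
        gcongr
        exact (abs_le.mpr (abs_le.mp (le_refl _)) : |v l| ≤ |v l|).trans
          (norm_le_pi_norm v l)
    _ = (∑ l, |L (Pi.single l 1)|) * ‖v‖ := by rw [Finset.sum_mul]

lemma linfty_opNorm_le (d : ℕ) (L : (Fin d → ℝ) →L[ℝ] ℝ) :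
    ‖L‖ ≤ ∑ l, |L (Pi.single l 1)| :=
  L.opNorm_le_bound (Finset.sum_nonneg fun _ _ => abs_nonneg _)
    fun v => linfty_apply_le d L v

lemma scalar_mvt (d : ℕ) (g : (Fin d → ℝ) → ℝ) (hg : Differentiable ℝ g) {c : ℝ}
    (hb : ∀ z, ‖fderiv ℝ g z‖ ≤ c) (x y : Fin d → ℝ) : |g y - g x| ≤ c * ‖y - x‖ := by
  have := (convex_univ (𝕜 := ℝ) (E := Fin d → ℝ)).norm_image_sub_le_of_norm_fderiv_le
    (f := g) (C := c) (fun z _ => (hg z).differentiableWithinAt.differentiableAt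
      (Filter.univ_mem)) (fun z _ => hb z) (Set.mem_univ x) (Set.mem_univ y)
  simpa using this

lemma proj_fderiv (d : ℕ) (G : (Fin d → ℝ) → (Fin d → ℝ)) (x : Fin d → ℝ)
    (hG : DifferentiableAt ℝ G x) (i : Fin d) (v : Fin d → ℝ) :
    fderiv ℝ (fun y => G y i) x v = fderiv ℝ G x v i := by
  have h1 : HasFDerivAt (fun y => G y i)
      ((ContinuousLinearMap.proj i).comp (fderiv ℝ G x)) x :=
    (ContinuousLinearMap.proj (R := ℝ) (φ := fun _ : Fin d => ℝ)
      i).hasFDerivAt.comp x hG.hasFDerivAt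
  rw [h1.fderiv]; rfl

lemma vec_mvt (d : ℕ) (G : (Fin d → ℝ) → (Fin d → ℝ)) (hG : Differentiable ℝ G) {c : ℝ}
    (hc : 0 ≤ c) (hb : ∀ (i : Fin d) (z : Fin d → ℝ), ∑ l, |pd d l (fun y => G y i) z| ≤ c)
    (x y : Fin d → ℝ) : ‖G y - G x‖ ≤ c * ‖y - x‖ := by
  rw [pi_norm_le_iff_of_nonneg (by positivity)]
  intro i
  have hgi : Differentiable ℝ (fun y => G y i) :=
    (ContinuousLinearMap.proj (R := ℝ) (φ := fun _ : Fin d => ℝ)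
      i).differentiable.comp hG
  have hb' : ∀ z, ‖fderiv ℝ (fun y => G y i) z‖ ≤ c := fun z =>
    (linfty_opNorm_le d _).trans (hb i z)
  have := scalar_mvt d (fun y => G y i) hgi hb' x y
  simpa [Real.norm_eq_abs] using this

lemma taylor_bound (d : ℕ) (g : (Fin d → ℝ) → ℝ) (hg : ContDiff ℝ 2 g) {c2 : ℝ}
    (hc2 : 0 ≤ c2) (hb : ∀ (l : Fin d) (z : Fin d → ℝ), ∑ l1, |pd d l1 (pd d l g) z| ≤ c2)
    (y0 y : Fin d → ℝ) :
    |g y - g y0 - fderiv ℝ g y0 (y - y0)| ≤ (d : ℝ) * c2 * ‖y - y0‖ ^ 2 := by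
  set L := fderiv ℝ g y0 with hL
  have hgd : Differentiable ℝ g := hg.differentiable (by norm_num)
  have hpd : ∀ l, Differentiable ℝ (pd d l g) := by
    intro l
    have h1 : ContDiff ℝ 1 (fderiv ℝ g) := hg.fderiv_right (by norm_num)
    exact (ContinuousLinearMap.apply ℝ ℝ (Pi.single l (1:ℝ))).differentiable.comp
      (h1.differentiable (by norm_num))
  have hpdb : ∀ l (z w : Fin d → ℝ), |pd d l g z - pd d l g w| ≤ c2 * ‖z - w‖ := fun l z w =>
    scalar_mvt d (pd d l g) (hpd l) (fun u => (linfty_opNorm_le d _).trans (hb l u)) w z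
  set ρ := ‖y - y0‖ with hρ
  have hρ0 : 0 ≤ ρ := norm_nonneg _
  have hconv : Convex ℝ (Metric.closedBall y0 ρ) := convex_closedBall _ _
  have key : ∀ z ∈ Metric.closedBall y0 ρ,
      ‖fderiv ℝ (fun u => g u - L u) z‖ ≤ (d : ℝ) * c2 * ρ := by
    intro z hz
    have hdz : dist z y0 ≤ ρ := Metric.mem_closedBall.mp hz
    have heq : fderiv ℝ (fun u => g u - L u) z = fderiv ℝ g z - L := by
      rw [fderiv_fun_sub (hgd z) L.differentiableAt, L.fderiv]
    rw [heq]
    calc ‖fderiv ℝ g z - L‖ ≤ ∑ l, |(fderiv ℝ g z - L) (Pi.single l 1)| :=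
          linfty_opNorm_le d _
      _ = ∑ l, |pd d l g z - pd d l g y0| := by
          simp only [ContinuousLinearMap.sub_apply]; rfl
      _ ≤ ∑ _l : Fin d, c2 * ρ := by
          refine Finset.sum_le_sum fun l _ => (hpdb l z y0).trans ?_
          have h1 : ‖z - y0‖ = dist z y0 := (dist_eq_norm z y0).symm
          rw [h1]; exact mul_le_mul_of_nonneg_left hdz hc2
      _ = (d : ℝ) * c2 * ρ := by simp [Finset.sum_const]; ring
  have hmemy : y ∈ Metric.closedBall y0 ρ := by
    rw [Metric.mem_closedBall, dist_eq_norm]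
  have hmemy0 : y0 ∈ Metric.closedBall y0 ρ := Metric.mem_closedBall_self hρ0
  have hmvt := hconv.norm_image_sub_le_of_norm_fderiv_le
    (f := fun u => g u - L u) (fun z _ => (hgd z).sub L.differentiableAt)
    key hmemy0 hmemy
  have heq2 : (g y - L y) - (g y0 - L y0) = g y - g y0 - L (y - y0) := by
    rw [map_sub]; ring
  rw [heq2] at hmvt
  calc |g y - g y0 - L (y - y0)| ≤ (d:ℝ) * c2 * ρ * ‖y - y0‖ := hmvt
    _ = (d:ℝ) * c2 * ‖y - y0‖ ^ 2 := by rw [hρ]; ring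

end Aux
/-- the linearly-transformed particle (LTP) transport operator
`T̄_{h,(1)} φ⁰_{h,k} := φ⁰_{h,k} ∘ B̄_{(1),k}` satisfies
`‖(T̄_{h,(1)} − T̄_ex) f⁰_h‖_∞ ≤ C h c_F (1 + h c_F)^d ‖f⁰‖_∞` with `c_F := |F̄|₁² |B̄|₂`
and `C = C(c_w, L_φ, ρ⁰, d)`. -/
theorem LTP_transport_error
    (d : ℕ) (hd : 1 ≤ d) (cw : ℝ) (hcw : 0 < cw) (Lφ : ℝ≥0)
    (ρ0 : ℝ) (hρ0 : 0 < ρ0) :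
    ∃ C : ℝ, 0 < C ∧
      ∀ (h : ℝ), 0 < h →
      ∀ (φ : (Fin d → ℝ) → ℝ), LipschitzWith Lφ φ → (∀ x, φ x ≠ 0 → ‖x‖ ≤ ρ0) →
      ∀ (f0 : (Fin d → ℝ) → ℝ), BddAbove (Set.range fun x => |f0 x|) →
      ∀ (w : (Fin d → ℤ) → ℝ), (∀ k, |w k| ≤ cw * h ^ d * ⨆ y, |f0 y|) →
      ∀ (F : (Fin d → ℝ) ≃ (Fin d → ℝ)),
        ContDiff ℝ 1 (F : (Fin d → ℝ) → (Fin d → ℝ)) →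
        ContDiff ℝ 2 (F.symm : (Fin d → ℝ) → (Fin d → ℝ)) →
      -- `cF1` bounds the seminorm `|F̄|₁ = max_i Σ_l ‖∂_l F_i‖_∞`
      ∀ (cF1 : ℝ), (∀ (i : Fin d) (x : Fin d → ℝ),
          ∑ l : Fin d, |pd d l (fun y => F y i) x| ≤ cF1) →
      -- `cB2` bounds the seminorm `|B̄|₂ = max_i Σ_{l₁,l₂} ‖∂_{l₁}∂_{l₂} B̄_i‖_∞`
      ∀ (cB2 : ℝ), (∀ (i : Fin d) (x : Fin d → ℝ),
          ∑ l1 : Fin d, ∑ l2 : Fin d,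
            |pd d l1 (pd d l2 (fun y => F.symm y i)) x| ≤ cB2) →
      ∀ x : Fin d → ℝ,
        |(∑' k : Fin d → ℤ, w k * part d h φ k (B1 d h F k x))
            - ∑' k : Fin d → ℤ, w k * part d h φ k (F.symm x)|
          ≤ C * (h * (cF1 ^ 2 * cB2)) * (1 + h * (cF1 ^ 2 * cB2)) ^ d * ⨆ y, |f0 y| := by
  classical
  have hA1 : (1:ℝ) ≤ max 1 (2 * (d:ℝ) * ρ0 ^ 2) := le_max_left _ _
  have hA2 : 2 * (d:ℝ) * ρ0 ^ 2 ≤ max 1 (2 * (d:ℝ) * ρ0 ^ 2) := le_max_right _ _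
  set A := max 1 (2 * (d:ℝ) * ρ0 ^ 2) with hA
  have hApos : (0:ℝ) < A := lt_of_lt_of_le one_pos hA1
  have hdpos : (0:ℝ) < d := by exact_mod_cast hd
  have hKpos : (0:ℝ) < (2*ρ0+1) * A := mul_pos (by linarith) hApos
  refine ⟨((2*ρ0+1) * A)^d * cw * ((Lφ:ℝ)+1) * (d:ℝ) * ρ0^2, ?_, ?_⟩
  · have h1 : (0:ℝ) < ((2*ρ0+1) * A)^d := pow_pos hKpos d
    have h2 : (0:ℝ) < (Lφ:ℝ)+1 := by positivity
    have h3 : (0:ℝ) < ρ0^2 := by positivity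
    exact mul_pos (mul_pos (mul_pos (mul_pos h1 hcw) h2) hdpos) h3
  intro h hh φ hLip hsupp f0 hbdd w hw F hF hFs cF1 hcF1 cB2 hcB2 x
  haveI : Nonempty (Fin d) := ⟨⟨0, hd⟩⟩
  have hhne : h ≠ 0 := ne_of_gt hh
  set M := ⨆ y, |f0 y| with hM
  have hM0 : 0 ≤ M := le_trans (abs_nonneg (f0 0)) (le_ciSup hbdd (0 : Fin d → ℝ))
  have hcF10 : 0 ≤ cF1 :=
    le_trans (Finset.sum_nonneg fun _ _ => abs_nonneg _) (hcF1 ⟨0, hd⟩ 0)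
  have hcB20 : 0 ≤ cB2 :=
    le_trans (Finset.sum_nonneg fun _ _ => Finset.sum_nonneg fun _ _ => abs_nonneg _)
      (hcB2 ⟨0, hd⟩ 0)
  set t := h * (cF1^2 * cB2) with ht
  have ht0 : 0 ≤ t := mul_nonneg hh.le (mul_nonneg (by positivity) hcB20)
  have hFd : Differentiable ℝ (F : (Fin d → ℝ) → (Fin d → ℝ)) := hF.differentiable (by norm_num)
  have hFsd : Differentiable ℝ (F.symm : (Fin d → ℝ) → (Fin d → ℝ)) :=
    hFs.differentiable (by norm_num)
  -- MVT for F
  have lemF : ∀ a b : Fin d → ℝ, ‖F b - F a‖ ≤ cF1 * ‖b - a‖ := fun a b =>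
    vec_mvt d F hFd hcF10 hcF1 a b
  -- pointwise operator bound for DF
  have lemDF : ∀ (a v : Fin d → ℝ),
      ‖fderiv ℝ (F : (Fin d → ℝ) → (Fin d → ℝ)) a v‖ ≤ cF1 * ‖v‖ := by
    intro a v
    rw [pi_norm_le_iff_of_nonneg (mul_nonneg hcF10 (norm_nonneg v))]
    intro i
    rw [Real.norm_eq_abs, ← proj_fderiv d F a (hFd a) i v]
    exact (linfty_apply_le d _ v).trans
      (mul_le_mul_of_nonneg_right (hcF1 i a) (norm_nonneg v))
  -- chain rule identity
  have lemId : ∀ (nk v : Fin d → ℝ),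
      fderiv ℝ (F : (Fin d → ℝ) → (Fin d → ℝ)) nk
        (fderiv ℝ (F.symm : (Fin d → ℝ) → (Fin d → ℝ)) (F nk) v) = v := by
    intro nk v
    have e : F.symm (F nk) = nk := F.symm_apply_apply nk
    have h1 : HasFDerivAt (F : (Fin d → ℝ) → (Fin d → ℝ))
        (fderiv ℝ (F : (Fin d → ℝ) → (Fin d → ℝ)) nk) (F.symm (F nk)) := by
      rw [e]; exact (hFd nk).hasFDerivAt
    have hcomp := h1.comp (F nk) (hFsd (F nk)).hasFDerivAt
    have hid : ((F : (Fin d → ℝ) → (Fin d → ℝ)) ∘ (F.symm : (Fin d → ℝ) → (Fin d → ℝ)))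
        = id := funext fun y => F.apply_symm_apply y
    rw [hid] at hcomp
    have h2 := hcomp.unique (hasFDerivAt_id (F nk))
    have h3 := DFunLike.congr_fun h2 v
    simpa using h3
  -- Taylor bound: distance between exact and linearized backward flow
  have lemB1 : ∀ k : Fin d → ℤ,
      ‖F.symm x - B1 d h F k x‖ ≤ (d:ℝ) * cB2 * ‖x - F (node d h k)‖^2 := by
    intro k
    set nk := node d h k with hnk
    have hnn : (0:ℝ) ≤ (d:ℝ) * cB2 * ‖x - F nk‖^2 :=
      mul_nonneg (mul_nonneg (Nat.cast_nonneg d) hcB20) (by positivity)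
    rw [pi_norm_le_iff_of_nonneg hnn]
    intro i
    have hgB : ContDiff ℝ 2 (fun y => F.symm y i) :=
      (ContinuousLinearMap.proj (R := ℝ) (φ := fun _ : Fin d => ℝ) i).contDiff.comp hFs
    have hb' : ∀ (l : Fin d) (z : Fin d → ℝ),
        ∑ l1, |pd d l1 (pd d l (fun y => F.symm y i)) z| ≤ cB2 := by
      intro l z
      refine le_trans ?_ (hcB2 i z)
      refine Finset.sum_le_sum fun l1 _ => ?_
      exact Finset.single_le_sum
        (f := fun l2 => |pd d l1 (pd d l2 (fun y => F.symm y i)) z|)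
        (fun _ _ => abs_nonneg _) (Finset.mem_univ l)
    have hT := taylor_bound d (fun y => F.symm y i) hgB hcB20 hb' (F nk) x
    have hproj := proj_fderiv d (F.symm : (Fin d → ℝ) → (Fin d → ℝ)) (F nk)
      (hFsd (F nk)) i (x - F nk)
    have e : F.symm (F nk) = nk := F.symm_apply_apply nk
    have hcompeq : (F.symm x - B1 d h F k x) i
        = F.symm x i - F.symm (F nk) i
          - fderiv ℝ (fun y => F.symm y i) (F nk) (x - F nk) := by
      simp only [Pi.sub_apply, Pi.add_apply, B1, ← hnk, hproj]
      have h4 : nk i = F.symm (F nk) i := by rw [e]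
      rw [h4]; ring
    rw [Real.norm_eq_abs, hcompeq]
    exact hT
  -- locality of particles
  have lemLoc : ∀ (k : Fin d → ℤ) (u : Fin d → ℝ), part d h φ k u ≠ 0 →
      ‖u - node d h k‖ ≤ h * ρ0 := by
    intro k u hne
    have hφ : φ (fun i => u i / h - (k i : ℝ)) ≠ 0 := fun h0 => hne (by simp [part, h0])
    have h1 := hsupp _ hφ
    rw [pi_norm_le_iff_of_nonneg (by positivity)]
    intro i
    have h2 : |u i / h - (k i:ℝ)| ≤ ρ0 := by
      have h3 := norm_le_pi_norm (fun i => u i / h - (k i:ℝ)) i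
      rw [Real.norm_eq_abs] at h3
      exact h3.trans h1
    rw [Real.norm_eq_abs, Pi.sub_apply]
    have h4 : u i - node d h k i = h * (u i / h - (k i:ℝ)) := by
      simp only [node]; field_simp
    rw [h4, abs_mul, abs_of_pos hh]
    exact mul_le_mul_of_nonneg_left h2 hh.le
  -- distance bound for contributing particles
  have hdist : ∀ k : Fin d → ℤ,
      (part d h φ k (B1 d h F k x) ≠ 0 ∨ part d h φ k (F.symm x) ≠ 0) →
      ‖x - F (node d h k)‖ ≤ cF1 * (h * ρ0) := by
    intro k hk
    rcases hk with hk | hk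
    · have h1 := lemLoc k _ hk
      have h2 : B1 d h F k x - node d h k
          = fderiv ℝ (F.symm : (Fin d → ℝ) → (Fin d → ℝ)) (F (node d h k))
              (x - F (node d h k)) := by
        simp [B1]
      have h3 : x - F (node d h k)
          = fderiv ℝ (F : (Fin d → ℝ) → (Fin d → ℝ)) (node d h k)
              (B1 d h F k x - node d h k) := by
        rw [h2, lemId]
      rw [h3]
      calc ‖fderiv ℝ (F : (Fin d → ℝ) → (Fin d → ℝ)) (node d h k)
            (B1 d h F k x - node d h k)‖
          ≤ cF1 * ‖B1 d h F k x - node d h k‖ := lemDF _ _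
        _ ≤ cF1 * (h * ρ0) := mul_le_mul_of_nonneg_left h1 hcF10
    · have h1 := lemLoc k _ hk
      have h3 : x - F (node d h k) = F (F.symm x) - F (node d h k) := by
        rw [F.apply_symm_apply]
      rw [h3]
      exact (lemF _ _).trans (mul_le_mul_of_nonneg_left h1 hcF10)
  -- per-term bound
  set B0 := cw * (Lφ:ℝ) * (d:ℝ) * ρ0^2 * t * M with hB0
  have hB00 : 0 ≤ B0 := by
    rw [hB0]
    exact mul_nonneg (mul_nonneg (mul_nonneg (mul_nonneg
      (mul_nonneg hcw.le Lφ.coe_nonneg) (Nat.cast_nonneg d)) (by positivity)) ht0) hM0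
  have hterm : ∀ k : Fin d → ℤ,
      |w k * part d h φ k (B1 d h F k x) - w k * part d h φ k (F.symm x)| ≤ B0 := by
    intro k
    by_cases hk : part d h φ k (B1 d h F k x) = 0 ∧ part d h φ k (F.symm x) = 0
    · rw [hk.1, hk.2]; simpa using hB00
    · rw [not_and_or] at hk
      have hd1 := hdist k hk
      have hB1b : ‖F.symm x - B1 d h F k x‖ ≤ (d:ℝ) * cB2 * (cF1*(h*ρ0))^2 :=
        (lemB1 k).trans (mul_le_mul_of_nonneg_left
          (pow_le_pow_left₀ (norm_nonneg _) hd1 2)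
          (mul_nonneg (Nat.cast_nonneg d) hcB20))
      have hDnn : (0:ℝ) ≤ ((d:ℝ) * cB2 * (cF1*(h*ρ0))^2) / h :=
        div_nonneg (mul_nonneg (mul_nonneg (Nat.cast_nonneg d) hcB20) (by positivity)) hh.le
      have harg : ‖(fun i => B1 d h F k x i / h - (k i:ℝ))
            - (fun i => F.symm x i / h - (k i:ℝ))‖
          ≤ ((d:ℝ) * cB2 * (cF1*(h*ρ0))^2) / h := by
        rw [pi_norm_le_iff_of_nonneg hDnn]
        intro i
        rw [Real.norm_eq_abs, Pi.sub_apply]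
        have h5 : (B1 d h F k x i / h - (k i:ℝ)) - (F.symm x i / h - (k i:ℝ))
            = (B1 d h F k x i - F.symm x i) / h := by ring
        rw [h5, abs_div, abs_of_pos hh]
        have h6 : |B1 d h F k x i - F.symm x i| ≤ (d:ℝ) * cB2 * (cF1*(h*ρ0))^2 := by
          have h7 := norm_le_pi_norm (B1 d h F k x - F.symm x) i
          rw [Real.norm_eq_abs, Pi.sub_apply] at h7
          calc |B1 d h F k x i - F.symm x i| ≤ ‖B1 d h F k x - F.symm x‖ := h7
            _ = ‖F.symm x - B1 d h F k x‖ := norm_sub_rev _ _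
            _ ≤ _ := hB1b
        gcongr
      have hlip : |φ (fun i => B1 d h F k x i / h - (k i:ℝ))
            - φ (fun i => F.symm x i / h - (k i:ℝ))|
          ≤ (Lφ:ℝ) * (((d:ℝ) * cB2 * (cF1*(h*ρ0))^2) / h) := by
        have h9 := hLip.dist_le_mul (fun i => B1 d h F k x i / h - (k i:ℝ))
          (fun i => F.symm x i / h - (k i:ℝ))
        rw [Real.dist_eq, dist_eq_norm] at h9
        exact h9.trans (mul_le_mul_of_nonneg_left harg Lφ.coe_nonneg)
      have hpdiff : |part d h φ k (B1 d h F k x) - part d h φ k (F.symm x)|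
          ≤ (h^d)⁻¹ * ((Lφ:ℝ) * (((d:ℝ) * cB2 * (cF1*(h*ρ0))^2) / h)) := by
        have h10 : part d h φ k (B1 d h F k x) - part d h φ k (F.symm x)
            = (h^d)⁻¹ * (φ (fun i => B1 d h F k x i / h - (k i:ℝ))
                - φ (fun i => F.symm x i / h - (k i:ℝ))) := by
          simp only [part]; ring
        rw [h10, abs_mul, abs_of_pos (by positivity : (0:ℝ) < (h^d)⁻¹)]
        exact mul_le_mul_of_nonneg_left hlip (by positivity)
      calc |w k * part d h φ k (B1 d h F k x) - w k * part d h φ k (F.symm x)|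
          = |w k| * |part d h φ k (B1 d h F k x) - part d h φ k (F.symm x)| := by
            rw [← mul_sub, abs_mul]
        _ ≤ (cw * h^d * M) * ((h^d)⁻¹ * ((Lφ:ℝ) * (((d:ℝ) * cB2 * (cF1*(h*ρ0))^2) / h))) := by
            refine mul_le_mul (hw k) hpdiff (abs_nonneg _) ?_
            exact mul_nonneg (mul_nonneg hcw.le (by positivity)) hM0
        _ = B0 := by rw [hB0, ht]; field_simp
  -- the index set
  set R := ρ0 + (d:ℝ) * ρ0^2 * t with hR
  have hR0 : 0 ≤ R :=
    add_nonneg hρ0.le (mul_nonneg (mul_nonneg (Nat.cast_nonneg d) (by positivity)) ht0)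
  set S' : Finset (Fin d → ℤ) := Fintype.piFinset
      (fun i => Finset.Icc ⌈F.symm x i / h - R⌉ ⌊F.symm x i / h + R⌋) with hS'
  have hmem : ∀ k : Fin d → ℤ,
      (part d h φ k (B1 d h F k x) ≠ 0 ∨ part d h φ k (F.symm x) ≠ 0) → k ∈ S' := by
    intro k hk
    have hnode : ‖F.symm x - node d h k‖ ≤ h * R := by
      rcases hk with hk | hk
      · have h1 := lemLoc k _ hk
        have hd1 := hdist k (Or.inl hk)
        have h2 : ‖F.symm x - B1 d h F k x‖ ≤ (d:ℝ) * cB2 * (cF1*(h*ρ0))^2 :=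
          (lemB1 k).trans (mul_le_mul_of_nonneg_left
            (pow_le_pow_left₀ (norm_nonneg _) hd1 2)
            (mul_nonneg (Nat.cast_nonneg d) hcB20))
        calc ‖F.symm x - node d h k‖
            ≤ ‖F.symm x - B1 d h F k x‖ + ‖B1 d h F k x - node d h k‖ := by
              have h3 := norm_add_le (F.symm x - B1 d h F k x) (B1 d h F k x - node d h k)
              simpa [sub_add_sub_cancel] using h3
          _ ≤ (d:ℝ) * cB2 * (cF1*(h*ρ0))^2 + h * ρ0 := add_le_add h2 h1
          _ = h * R := by rw [hR, ht]; ring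
      · have h1 := lemLoc k _ hk
        refine h1.trans ?_
        have h2 : ρ0 ≤ R := le_add_of_nonneg_right
          (mul_nonneg (mul_nonneg (Nat.cast_nonneg d) (by positivity)) ht0)
        exact mul_le_mul_of_nonneg_left h2 hh.le
    rw [hS', Fintype.mem_piFinset]
    intro i
    have hi : |F.symm x i - h * (k i:ℝ)| ≤ h * R := by
      have h3 := norm_le_pi_norm (F.symm x - node d h k) i
      rw [Real.norm_eq_abs, Pi.sub_apply] at h3
      simpa [node] using h3.trans hnode
    have hi' : |F.symm x i / h - (k i:ℝ)| ≤ R := by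
      have h4 : F.symm x i / h - (k i:ℝ) = (F.symm x i - h * (k i:ℝ)) / h := by
        field_simp
      rw [h4, abs_div, abs_of_pos hh, div_le_iff₀ hh]
      linarith [hi, (mul_comm h R : h * R = R * h)]
    have h5 := abs_le.mp hi'
    rw [Finset.mem_Icc]
    refine ⟨Int.ceil_le.mpr ?_, Int.le_floor.mpr ?_⟩
    · linarith [h5.2]
    · linarith [h5.1]
  have hz1 : ∀ k : Fin d → ℤ, k ∉ S' → w k * part d h φ k (B1 d h F k x) = 0 := by
    intro k hkn
    by_cases hp : part d h φ k (B1 d h F k x) = 0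
    · rw [hp, mul_zero]
    · exact absurd (hmem k (Or.inl hp)) hkn
  have hz2 : ∀ k : Fin d → ℤ, k ∉ S' → w k * part d h φ k (F.symm x) = 0 := by
    intro k hkn
    by_cases hp : part d h φ k (F.symm x) = 0
    · rw [hp, mul_zero]
    · exact absurd (hmem k (Or.inr hp)) hkn
  -- cardinality bound
  have hfac : ∀ i : Fin d,
      ((Finset.Icc ⌈F.symm x i / h - R⌉ ⌊F.symm x i / h + R⌋).card : ℝ) ≤ 2*R+1 := by
    intro i
    rw [Int.card_Icc]
    set z : ℤ := ⌊F.symm x i / h + R⌋ + 1 - ⌈F.symm x i / h - R⌉ with hz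
    by_cases h0 : (0:ℤ) ≤ z
    · have hcast : ((z.toNat : ℕ) : ℝ) = ((z : ℤ) : ℝ) := by
        rw [← Int.cast_natCast, Int.toNat_of_nonneg h0]
      rw [hcast, hz]
      push_cast
      have hfl := Int.floor_le (F.symm x i / h + R)
      have hce := Int.le_ceil (F.symm x i / h - R)
      linarith
    · rw [Int.toNat_of_nonpos (not_le.mp h0).le]
      norm_num
      linarith
  have hcard : (S'.card : ℝ) ≤ ((2*ρ0+1)*A)^d * (1+t)^d := by
    have h1 : S'.card
        = ∏ i : Fin d, (Finset.Icc ⌈F.symm x i / h - R⌉ ⌊F.symm x i / h + R⌋).card := by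
      rw [hS', Fintype.card_piFinset]
    rw [h1, Nat.cast_prod]
    have h2 : ∏ i : Fin d,
        ((Finset.Icc ⌈F.symm x i / h - R⌉ ⌊F.symm x i / h + R⌋).card : ℝ)
        ≤ ∏ _i : Fin d, (2*R+1) :=
      Finset.prod_le_prod (fun i _ => Nat.cast_nonneg _) (fun i _ => hfac i)
    refine h2.trans ?_
    rw [Finset.prod_const, Finset.card_univ, Fintype.card_fin]
    have h3 : 2*R+1 ≤ (2*ρ0+1)*A*(1+t) := by
      rw [hR]
      nlinarith [mul_nonneg ht0 (sub_nonneg.mpr hA2),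
        mul_nonneg ht0 (mul_nonneg (by linarith : (0:ℝ) ≤ 2*ρ0) hApos.le),
        hA1, hA2, ht0, hρ0]
    calc (2*R+1)^d ≤ ((2*ρ0+1)*A*(1+t))^d := pow_le_pow_left₀ (by linarith) h3 d
      _ = ((2*ρ0+1)*A)^d * (1+t)^d := by rw [mul_pow]
  -- put everything together
  rw [tsum_eq_sum hz1, tsum_eq_sum hz2, ← Finset.sum_sub_distrib]
  calc |∑ k ∈ S', (w k * part d h φ k (B1 d h F k x) - w k * part d h φ k (F.symm x))|
      ≤ ∑ k ∈ S', |w k * part d h φ k (B1 d h F k x) - w k * part d h φ k (F.symm x)| :=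
        Finset.abs_sum_le_sum_abs _ _
    _ ≤ ∑ _k ∈ S', B0 := Finset.sum_le_sum fun k _ => hterm k
    _ = (S'.card : ℝ) * B0 := by rw [Finset.sum_const, nsmul_eq_mul]
    _ ≤ (((2*ρ0+1)*A)^d * (1+t)^d) * B0 := mul_le_mul_of_nonneg_right hcard hB00
    _ ≤ ((2*ρ0+1) * A)^d * cw * ((Lφ:ℝ)+1) * (d:ℝ) * ρ0^2 * t * (1+t)^d * M := by
        rw [hB0]
        have hK : (0:ℝ) ≤ ((2*ρ0+1)*A)^d * (1+t)^d :=
          mul_nonneg (pow_nonneg (by linarith) d) (pow_nonneg (by linarith) d)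
        have hbase : (0:ℝ) ≤ cw * (d:ℝ) * ρ0^2 * t * M :=
          mul_nonneg (mul_nonneg (mul_nonneg (mul_nonneg hcw.le (Nat.cast_nonneg d))
            (by positivity)) ht0) hM0
        nlinarith [mul_nonneg hK hbase]
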